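/- Let X be a locally compact zero-dimensional Hausdorff space. Then X is ultraparacompact if and only if X can be partitioned into a family of compact open sets. -/

import Mathlib

/-- A partition of the space `X` into (nonempty, pairwise disjoint) clopen sets. -/
def IsClopenPartition (X : Type*) [TopologicalSpace X] (P : Set (Set X)) : Prop :=
  (∀ S ∈ P, IsClopen S) ∧ (∀ S ∈ P, S.Nonempty) ∧
    (∀ S ∈ P, ∀ T ∈ P, S ≠ T → S ∩ T = ∅) ∧ ⋃₀ P = Set.univ

/-- A space is ultraparacompact if every open cover has a refinement that is a
partition of the space into clopen sets. -/
def Ultraparacompact (X : Type*) [TopologicalSpace X] : Prop :=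
  ∀ 𝒰 : Set (Set X), (∀ U ∈ 𝒰, IsOpen U) → ⋃₀ 𝒰 = Set.univ →
    ∃ P : Set (Set X), IsClopenPartition X P ∧ ∀ S ∈ P, ∃ U ∈ 𝒰, S ⊆ U

/-- A space is ultranormal if any two disjoint closed sets are separated by a clopen set. -/
def Ultranormal (X : Type*) [TopologicalSpace X] : Prop :=
  ∀ R S : Set X, IsClosed R → IsClosed S → Disjoint R S →
    ∃ C : Set X, IsClopen C ∧ R ⊆ C ∧ S ∩ C = ∅

/-- A space is zero-dimensional if the clopen sets form a basis for the topology. -/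
def ZeroDimensional (X : Type*) [TopologicalSpace X] : Prop :=
  TopologicalSpace.IsTopologicalBasis {s : Set X | IsClopen s}

lemma isClopen_partialSups {X : Type*} [TopologicalSpace X] {f : ℕ → Set X}
    (hf : ∀ n, IsClopen (f n)) : ∀ n, IsClopen (partialSups f n) := by
  intro n
  induction n with
  | zero => simpa using hf 0
  | succ n ih => rw [partialSups_add_one]; exact ih.union (hf (n + 1))

lemma isClopen_disjointed {X : Type*} [TopologicalSpace X] {f : ℕ → Set X}
    (hf : ∀ n, IsClopen (f n)) : ∀ n, IsClopen (disjointed f n) := by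
  intro n
  cases n with
  | zero => simpa [disjointed_zero] using hf 0
  | succ n => rw [disjointed_add_one]; exact (hf (n + 1)).diff (isClopen_partialSups hf n)

/-- Every compact open set covered by an open cover in a zero-dimensional space can be
written as a countable union of clopen sets, each inside a member of the cover. -/
lemma exists_seq_clopen {X : Type*} [TopologicalSpace X]
    (hX : TopologicalSpace.IsTopologicalBasis {s : Set X | IsClopen s})
    {S : Set X} (hS : IsCompact S) (hSo : IsOpen S)
    (𝒰 : Set (Set X)) (h𝒰 : ∀ U ∈ 𝒰, IsOpen U) (hcov : S ⊆ ⋃₀ 𝒰) :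
    ∃ f : ℕ → Set X, (∀ n, IsClopen (f n)) ∧ (∀ n, f n ⊆ S) ∧
      (∀ n, (f n).Nonempty → ∃ U ∈ 𝒰, f n ⊆ U) ∧ (⋃ n, f n) = S := by
  set 𝒞 : Set (Set X) := {C | IsClopen C ∧ C ⊆ S ∧ ∃ U ∈ 𝒰, C ⊆ U} with h𝒞
  have hcov2 : S ⊆ ⋃ C : 𝒞, (C : Set X) := by
    intro x hx
    obtain ⟨U, hU, hxU⟩ := hcov hx
    obtain ⟨C, hC, hxC, hCsub⟩ := hX.exists_subset_of_mem_open (Set.mem_inter hxU hx)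
      ((h𝒰 U hU).inter hSo)
    exact Set.mem_iUnion.2 ⟨⟨C, hC, fun y hy => (hCsub hy).2, U, hU,
      fun y hy => (hCsub hy).1⟩, hxC⟩
  obtain ⟨t, ht⟩ := hS.elim_finite_subcover (fun C : 𝒞 => (C : Set X))
    (fun C => C.2.1.isOpen) hcov2
  classical
  set L : List (Set X) := t.toList.map Subtype.val with hL
  have hLmem : ∀ C ∈ L, C ∈ 𝒞 := by
    intro C hC
    rw [hL, List.mem_map] at hC
    obtain ⟨D, _, rfl⟩ := hC
    exact D.2
  have key : ∀ n, L.getD n ∅ ∈ 𝒞 ∨ L.getD n ∅ = ∅ := by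
    intro n
    rcases lt_or_ge n L.length with h | h
    · rw [List.getD_eq_getElem _ _ h]; exact Or.inl (hLmem _ (L.getElem_mem h))
    · rw [List.getD_eq_default _ _ h]; exact Or.inr rfl
  refine ⟨fun n => L.getD n ∅, ?_, ?_, ?_, ?_⟩
  · intro n
    rcases key n with h | h
    · exact h.1
    · show IsClopen (L.getD n ∅); rw [h]; exact isClopen_empty
  · intro n
    rcases key n with h | h
    · exact h.2.1
    · show L.getD n ∅ ⊆ S; rw [h]; exact Set.empty_subset S
  · intro n hne
    rcases key n with h | h
    · exact h.2.2
    · exact absurd h hne.ne_empty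
  · apply Set.Subset.antisymm
    · apply Set.iUnion_subset
      intro n
      rcases key n with h | h
      · exact h.2.1
      · show L.getD n ∅ ⊆ S; rw [h]; exact Set.empty_subset S
    · intro x hx
      obtain ⟨C, hCt, hxC⟩ := Set.mem_iUnion₂.1 (ht hx)
      have hmem : (C : Set X) ∈ L := by
        rw [hL, List.mem_map]
        exact ⟨C, Finset.mem_toList.2 hCt, rfl⟩
      obtain ⟨n, hn, hget⟩ := List.getElem_of_mem hmem
      refine Set.mem_iUnion.2 ⟨n, ?_⟩
      show x ∈ L.getD n ∅
      rw [List.getD_eq_getElem _ _ hn, hget]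
      exact hxC

/-- A locally compact zero-dimensional Hausdorff space is ultraparacompact if and only if
it can be partitioned into a family of compact open sets. -/
theorem locallyCompact_ultraparacompact_iff (X : Type*) [TopologicalSpace X] [T2Space X]
    [LocallyCompactSpace X] (hX : ZeroDimensional X) :
    Ultraparacompact X ↔
      ∃ P : Set (Set X), (∀ S ∈ P, IsCompact S ∧ IsOpen S) ∧ (∀ S ∈ P, S.Nonempty) ∧
        (∀ S ∈ P, ∀ T ∈ P, S ≠ T → S ∩ T = ∅) ∧ ⋃₀ P = Set.univ := by
  constructor
  · -- forward direction: refine the cover by compact open sets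
    intro hups
    set 𝒰 : Set (Set X) := {C | IsClopen C ∧ IsCompact C} with h𝒰
    have hcov : ⋃₀ 𝒰 = Set.univ := by
      apply Set.eq_univ_of_forall
      intro x
      obtain ⟨K, hK, hKnhds⟩ := exists_compact_mem_nhds x
      obtain ⟨C, hC, hxC, hCsub⟩ := hX.exists_subset_of_mem_open
        (mem_interior_iff_mem_nhds.2 hKnhds) isOpen_interior
      exact ⟨C, ⟨hC, hK.of_isClosed_subset hC.isClosed (hCsub.trans interior_subset)⟩, hxC⟩
    obtain ⟨P, ⟨hcl, hne, hdisj, huniv⟩, href⟩ := hups 𝒰 (fun U hU => hU.1.isOpen) hcov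
    refine ⟨P, fun S hS => ?_, hne, hdisj, huniv⟩
    obtain ⟨U, hU, hSU⟩ := href S hS
    exact ⟨hU.2.of_isClosed_subset (hcl S hS).isClosed hSU, (hcl S hS).isOpen⟩
  · -- backward direction
    rintro ⟨P, hP, -, hdisj, huniv⟩
    intro 𝒰 h𝒰 hcov
    classical
    have h : ∀ S ∈ P, ∃ f : ℕ → Set X, (∀ n, IsClopen (f n)) ∧ (∀ n, f n ⊆ S) ∧
        (∀ n, (f n).Nonempty → ∃ U ∈ 𝒰, f n ⊆ U) ∧ (⋃ n, f n) = S := by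
      intro S hS
      exact exists_seq_clopen hX (hP S hS).1 (hP S hS).2 𝒰 h𝒰
        (by rw [hcov]; exact Set.subset_univ S)
    choose! f hf1 hf2 hf3 hf4 using h
    refine ⟨{D | D.Nonempty ∧ ∃ S ∈ P, ∃ n, D = disjointed (f S) n}, ⟨?_, ?_, ?_, ?_⟩, ?_⟩
    · rintro D ⟨-, S, hS, n, rfl⟩
      exact isClopen_disjointed (hf1 S hS) n
    · exact fun D hD => hD.1
    · rintro D ⟨-, S, hS, n, rfl⟩ T ⟨-, S', hS', m, rfl⟩ hne
      by_cases hSS : S = S'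
      · subst hSS
        have hnm : n ≠ m := fun h => hne (by rw [h])
        exact Set.disjoint_iff_inter_eq_empty.1 (disjoint_disjointed (f S) hnm)
      · have h1 : disjointed (f S) n ⊆ S := (disjointed_le (f S) n).trans (hf2 S hS n)
        have h2 : disjointed (f S') m ⊆ S' := (disjointed_le (f S') m).trans (hf2 S' hS' m)
        rw [← Set.subset_empty_iff, ← hdisj S hS S' hS' hSS]
        exact Set.inter_subset_inter h1 h2
    · apply Set.eq_univ_of_forall
      intro x
      have hx : x ∈ ⋃₀ P := by rw [huniv]; trivial
      obtain ⟨S, hS, hxS⟩ := hx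
      have hx2 : x ∈ ⨆ n, disjointed (f S) n := by
        rw [iSup_disjointed]
        show x ∈ ⋃ n, f S n
        rw [hf4 S hS]; exact hxS
      obtain ⟨n, hn⟩ := Set.mem_iUnion.1 hx2
      exact ⟨disjointed (f S) n, ⟨⟨x, hn⟩, S, hS, n, rfl⟩, hn⟩
    · rintro D ⟨hDne, S, hS, n, rfl⟩
      obtain ⟨U, hU, hsub⟩ := hf3 S hS n (hDne.mono (disjointed_le (f S) n))
      exact ⟨U, hU, (disjointed_le (f S) n).trans hsub⟩
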